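/- The cosine matrix of type II of size n is orthogonal, i.e., C_n^II (C_n^II)^T = I_n. -/

import Mathlib

open Matrix

/-- The cosine matrix of type II of size `n`. -/
noncomputable def CII (n : ℕ) : Matrix (Fin n) (Fin n) ℝ :=
  Matrix.of fun k l : Fin n =>
    Real.sqrt (2 / (n : ℝ)) * (if (k : ℕ) % n = 0 then 1 / Real.sqrt 2 else 1) *
      Real.cos ((k : ℕ) * (2 * (l : ℕ) + 1) * Real.pi / (2 * (n : ℝ)))

/-- The cosine matrix of type IV of size `n`. -/
noncomputable def CIV (n : ℕ) : Matrix (Fin n) (Fin n) ℝ :=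
  Matrix.of fun k l : Fin n =>
    Real.sqrt (2 / (n : ℝ)) *
      Real.cos ((2 * (k : ℕ) + 1) * (2 * (l : ℕ) + 1) * Real.pi / (4 * (n : ℝ)))

lemma sum_cos_odd (θ : ℝ) (n : ℕ) :
    2 * Real.sin θ * ∑ l ∈ Finset.range n, Real.cos ((2 * (l:ℝ) + 1) * θ) =
      Real.sin (2 * (n:ℝ) * θ) := by
  rw [Finset.mul_sum]
  have h : ∀ l : ℕ, 2 * Real.sin θ * Real.cos ((2*(l:ℝ)+1)*θ) =
      Real.sin (2*((l:ℝ)+1)*θ) - Real.sin (2*(l:ℝ)*θ) := by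
    intro l
    rw [Real.sin_sub_sin]
    ring_nf
  rw [Finset.sum_congr rfl fun l _ => h l]
  have := Finset.sum_range_sub (fun l : ℕ => Real.sin (2*(l:ℝ)*θ)) n
  push_cast at this ⊢
  rw [this]
  simp

lemma sum_cos_zero (n : ℕ) (hn : 0 < n) (m : ℤ) (hm : ¬ ((2*(n:ℤ)) ∣ m)) :
    ∑ l ∈ Finset.range n, Real.cos ((2*(l:ℝ)+1) * ((m:ℝ) * Real.pi / (2*(n:ℝ)))) = 0 := by
  have hn' : (n:ℝ) ≠ 0 := Nat.cast_ne_zero.mpr hn.ne'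
  have key := sum_cos_odd ((m:ℝ) * Real.pi / (2*(n:ℝ))) n
  have hs : Real.sin (2 * (n:ℝ) * ((m:ℝ) * Real.pi / (2*(n:ℝ)))) = 0 := by
    have : 2*(n:ℝ) * ((m:ℝ)*Real.pi/(2*(n:ℝ))) = m * Real.pi := by field_simp
    rw [this]
    exact Real.sin_int_mul_pi m
  rw [hs] at key
  have hsθ : Real.sin ((m:ℝ) * Real.pi / (2*(n:ℝ))) ≠ 0 := by
    intro h
    rw [Real.sin_eq_zero_iff] at h
    obtain ⟨t, ht⟩ := h
    apply hm ⟨t, ?_⟩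
    have : (m:ℝ) = 2*(n:ℝ)*t := by
      field_simp at ht
      have := mul_right_cancel₀ Real.pi_ne_zero (by rw [← ht]; ring : (m:ℝ) * Real.pi = (2*(n:ℝ)*t) * Real.pi)
      linarith [this]
    exact_mod_cast this
  exact (mul_eq_zero.mp key).resolve_left (mul_ne_zero two_ne_zero hsθ)

lemma not_dvd_of_lt (n : ℕ) (m : ℤ) (hm : m ≠ 0) (h : |m| < 2*(n:ℤ)) : ¬ ((2*(n:ℤ)) ∣ m) :=
  fun hd => hm (Int.eq_zero_of_abs_lt_dvd hd h)

theorem CII_mul_transpose (n : ℕ) (hn : 0 < n) :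
    CII n * (CII n)ᵀ = 1 := by
  have hn' : (n:ℝ) ≠ 0 := Nat.cast_ne_zero.mpr hn.ne'
  ext k j
  rw [Matrix.mul_apply, Matrix.one_apply]
  simp only [CII, Matrix.of_apply, Matrix.transpose_apply]
  have hs2 : Real.sqrt (2/(n:ℝ)) * Real.sqrt (2/(n:ℝ)) = 2/(n:ℝ) :=
    Real.mul_self_sqrt (by positivity)
  set εk : ℝ := if (k : ℕ) % n = 0 then 1 / Real.sqrt 2 else 1 with hεk
  set εj : ℝ := if (j : ℕ) % n = 0 then 1 / Real.sqrt 2 else 1 with hεj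
  have hterm : ∀ x : Fin n,
      (Real.sqrt (2/(n:ℝ)) * εk * Real.cos ((k:ℕ) * (2 * (x:ℕ) + 1) * Real.pi / (2 * (n:ℝ)))) *
      (Real.sqrt (2/(n:ℝ)) * εj * Real.cos ((j:ℕ) * (2 * (x:ℕ) + 1) * Real.pi / (2 * (n:ℝ)))) =
      (εk * εj) / (n:ℝ) *
        (Real.cos ((2*((x:ℕ):ℝ)+1) * (((((k:ℤ)-(j:ℤ))):ℝ) * Real.pi / (2*(n:ℝ)))) +
         Real.cos ((2*((x:ℕ):ℝ)+1) * (((((k:ℕ)+(j:ℕ):ℕ)):ℝ) * Real.pi / (2*(n:ℝ))))) := by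
    intro x
    have hcc : ∀ a b : ℝ, Real.cos a * Real.cos b = (Real.cos (a-b) + Real.cos (a+b))/2 := by
      intro a b; rw [Real.cos_sub, Real.cos_add]; ring
    have e1 : ((k:ℕ):ℝ) * (2 * ((x:ℕ):ℝ) + 1) * Real.pi / (2 * (n:ℝ)) -
        ((j:ℕ):ℝ) * (2 * ((x:ℕ):ℝ) + 1) * Real.pi / (2 * (n:ℝ)) =
        (2*((x:ℕ):ℝ)+1) * (((((k:ℤ)-(j:ℤ))):ℝ) * Real.pi / (2*(n:ℝ))) := by
      push_cast; ring
    have e2 : ((k:ℕ):ℝ) * (2 * ((x:ℕ):ℝ) + 1) * Real.pi / (2 * (n:ℝ)) +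
        ((j:ℕ):ℝ) * (2 * ((x:ℕ):ℝ) + 1) * Real.pi / (2 * (n:ℝ)) =
        (2*((x:ℕ):ℝ)+1) * (((((k:ℕ)+(j:ℕ):ℕ)):ℝ) * Real.pi / (2*(n:ℝ))) := by
      push_cast; ring
    calc _ = (Real.sqrt (2/(n:ℝ)) * Real.sqrt (2/(n:ℝ))) * (εk * εj) *
          (Real.cos (((k:ℕ):ℝ) * (2 * ((x:ℕ):ℝ) + 1) * Real.pi / (2 * (n:ℝ))) *
           Real.cos (((j:ℕ):ℝ) * (2 * ((x:ℕ):ℝ) + 1) * Real.pi / (2 * (n:ℝ)))) := by ring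
    _ = _ := by rw [hs2, hcc, e1, e2]; ring
  rw [Finset.sum_congr rfl fun x _ => hterm x]
  rw [Fin.sum_univ_eq_sum_range (fun x : ℕ =>
      (εk * εj) / (n:ℝ) *
        (Real.cos ((2*(x:ℝ)+1) * (((((k:ℤ)-(j:ℤ))):ℝ) * Real.pi / (2*(n:ℝ)))) +
         Real.cos ((2*(x:ℝ)+1) * (((((k:ℕ)+(j:ℕ):ℕ)):ℝ) * Real.pi / (2*(n:ℝ)))))) n]
  rw [← Finset.mul_sum, Finset.sum_add_distrib]
  by_cases hkj : k = j
  · subst hkj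
    simp only [if_pos rfl, if_true, sub_self, Int.cast_zero, zero_mul, mul_zero, zero_div,
      Real.cos_zero]
    rw [Finset.sum_const, Finset.card_range, nsmul_eq_mul, mul_one]
    by_cases hk0 : (k:ℕ) = 0
    · have hε : εk = 1 / Real.sqrt 2 := by
        rw [hεk, if_pos (by rw [Nat.mod_eq_of_lt k.isLt, hk0])]
      have hε' : εj = 1 / Real.sqrt 2 := by
        rw [hεj, if_pos (by rw [Nat.mod_eq_of_lt k.isLt, hk0])]
      have hsum : ∑ x ∈ Finset.range n, Real.cos ((2*(x:ℝ)+1) *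
          (((((k:ℕ)+(k:ℕ):ℕ)):ℝ) * Real.pi / (2*(n:ℝ)))) = n := by
        simp [hk0]
      rw [hsum, hε, hε']
      have h2 : Real.sqrt 2 * Real.sqrt 2 = 2 := Real.mul_self_sqrt (by norm_num)
      have h12 : (1/Real.sqrt 2) * (1/Real.sqrt 2) = 1/2 := by
        rw [div_mul_div_comm, one_mul, h2]
      rw [h12]
      field_simp
      ring
    · have hε : εk = 1 := by
        rw [hεk, if_neg (by rw [Nat.mod_eq_of_lt k.isLt]; exact hk0)]
      have hε' : εj = 1 := by
        rw [hεj, if_neg (by rw [Nat.mod_eq_of_lt k.isLt]; exact hk0)]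
      have hz : ∑ x ∈ Finset.range n, Real.cos ((2*(x:ℝ)+1) *
          (((((k:ℕ)+(k:ℕ):ℕ)):ℝ) * Real.pi / (2*(n:ℝ)))) = 0 := by
        have hd : ¬ ((2*(n:ℤ)) ∣ ((((k:ℕ)+(k:ℕ):ℕ)):ℤ)) := by
          apply not_dvd_of_lt
          · have := k.isLt; push_cast; omega
          · have := k.isLt
            rw [abs_of_nonneg (by positivity)]
            push_cast; omega
        have := sum_cos_zero n hn ((((k:ℕ)+(k:ℕ):ℕ)):ℤ) hd
        push_cast at this ⊢
        exact this
      rw [hz, hε, hε']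
      field_simp
      ring
  · rw [if_neg hkj]
    have hne : (k:ℕ) ≠ (j:ℕ) := fun h => hkj (Fin.ext h)
    have hz1 : ∑ x ∈ Finset.range n, Real.cos ((2*(x:ℝ)+1) *
        (((((k:ℤ)-(j:ℤ))):ℝ) * Real.pi / (2*(n:ℝ)))) = 0 := by
      have hd : ¬ ((2*(n:ℤ)) ∣ ((k:ℤ)-(j:ℤ))) := by
        apply not_dvd_of_lt
        · have hk := k.isLt; have hj := j.isLt
          simp only [Fin.val_injective.ne_iff] at hne
          omega
        · have hk := k.isLt; have hj := j.isLt
          rw [abs_sub_lt_iff]; push_cast; omega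
      have := sum_cos_zero n hn ((k:ℤ)-(j:ℤ)) hd
      push_cast at this ⊢
      exact this
    have hz2 : ∑ x ∈ Finset.range n, Real.cos ((2*(x:ℝ)+1) *
        (((((k:ℕ)+(j:ℕ):ℕ)):ℝ) * Real.pi / (2*(n:ℝ)))) = 0 := by
      have hd : ¬ ((2*(n:ℤ)) ∣ ((((k:ℕ)+(j:ℕ):ℕ)):ℤ)) := by
        apply not_dvd_of_lt
        · have hk := k.isLt; have hj := j.isLt; push_cast; omega
        · have hk := k.isLt; have hj := j.isLt
          rw [abs_of_nonneg (by positivity)]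
          push_cast; omega
      have := sum_cos_zero n hn ((((k:ℕ)+(j:ℕ):ℕ)):ℤ) hd
      push_cast at this ⊢
      exact this
    rw [hz1, hz2]
    ring
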